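/- Let φ_1,…,φ_m ∈ ℝ^d be feature vectors spanning ℝ^d. Then there exists a probability distribution π* on {1,…,m} such that V(π*) = Σ_j π*(j) φ_j φ_jᵀ is invertible and g(π*) = max_{1≤j≤m} φ_jᵀ V(π*)^{-1} φ_j = d; in particular, the infimum of g(π) over all probability distributions π with V(π) invertible equals d and is attained. -/

import Mathlib

open Matrix Finset

/-- The design matrix `V(w) = Σ j, w j • φ j (φ j)ᵀ` of feature vectors `φ` under
weights `w`. -/
noncomputable def designMatrix {ι : Type*} [Fintype ι] {d : ℕ} (φ : ι → Fin d → ℝ)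
    (w : ι → ℝ) : Matrix (Fin d) (Fin d) ℝ :=
  ∑ j, w j • vecMulVec (φ j) (φ j)

/-- `g(w) = max_j (φ j)ᵀ V(w)⁻¹ (φ j)`. -/
noncomputable def gOpt {ι : Type*} [Fintype ι] [Nonempty ι] {d : ℕ} (φ : ι → Fin d → ℝ)
    (w : ι → ℝ) : ℝ :=
  Finset.univ.sup' Finset.univ_nonempty (fun j => φ j ⬝ᵥ ((designMatrix φ w)⁻¹ *ᵥ φ j))

section Aux
variable {ι : Type*} [Fintype ι] {d : ℕ} (φ : ι → Fin d → ℝ)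

lemma designMatrix_mulVec (w : ι → ℝ) (x : Fin d → ℝ) :
    designMatrix φ w *ᵥ x = ∑ j, (w j * (φ j ⬝ᵥ x)) • φ j := by
  ext i
  simp only [designMatrix, mulVec, dotProduct, Matrix.sum_apply, Matrix.smul_apply,
    vecMulVec_apply, smul_eq_mul, Finset.sum_apply, Pi.smul_apply, Finset.sum_mul,
    Finset.mul_sum]
  rw [Finset.sum_comm]
  exact Finset.sum_congr rfl fun j _ => Finset.sum_congr rfl fun k _ => by ring

lemma dot_designMatrix (w : ι → ℝ) (x : Fin d → ℝ) :
    x ⬝ᵥ designMatrix φ w *ᵥ x = ∑ j, w j * (φ j ⬝ᵥ x) ^ 2 := by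
  rw [designMatrix_mulVec]
  simp only [dotProduct, Finset.sum_apply, Pi.smul_apply, smul_eq_mul, Finset.mul_sum]
  rw [Finset.sum_comm]
  refine Finset.sum_congr rfl fun j _ => ?_
  simp only [dotProduct, sq, Finset.sum_mul, Finset.mul_sum]
  refine Finset.sum_congr rfl fun i _ => ?_
  exact Finset.sum_congr rfl fun k _ => by ring

lemma designMatrix_combo (a b : ℝ) (w v : ι → ℝ) :
    designMatrix φ (a • w + b • v) = a • designMatrix φ w + b • designMatrix φ v := by
  simp only [designMatrix, Finset.smul_sum, smul_smul, ← Finset.sum_add_distrib,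
    Pi.add_apply, Pi.smul_apply, smul_eq_mul, add_smul]

lemma designMatrix_single [DecidableEq ι] (j : ι) :
    designMatrix φ (Pi.single j 1) = vecMulVec (φ j) (φ j) := by
  simp [designMatrix, Pi.single_apply, ite_smul]

lemma exists_dot_ne (hspan : Submodule.span ℝ (Set.range φ) = ⊤)
    {x : Fin d → ℝ} (hx : x ≠ 0) : ∃ j, φ j ⬝ᵥ x ≠ 0 := by
  by_contra h
  push_neg at h
  have key : ∀ y ∈ Submodule.span ℝ (Set.range φ), y ⬝ᵥ x = 0 := by
    intro y hy
    induction hy using Submodule.span_induction with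
    | mem y hy => obtain ⟨j, rfl⟩ := hy; exact h j
    | zero => simp
    | add y z _ _ hy hz => simp [add_dotProduct, hy, hz]
    | smul a y _ hy => simp [smul_dotProduct, hy]
  have := key x (by rw [hspan]; trivial)
  exact hx (dotProduct_self_eq_zero.mp this)

lemma posDef_designMatrix (hspan : Submodule.span ℝ (Set.range φ) = ⊤)
    (w : ι → ℝ) (hw : ∀ j, 0 < w j) : (designMatrix φ w).PosDef := by
  rw [posDef_iff_dotProduct_mulVec]
  constructor
  · ext i k
    simp only [designMatrix, conjTranspose_apply, Matrix.sum_apply, Matrix.smul_apply,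
      vecMulVec_apply, smul_eq_mul, star_trivial]
    exact Finset.sum_congr rfl fun j _ => by ring
  · intro x hx
    rw [star_trivial, dot_designMatrix]
    obtain ⟨j, hj⟩ := exists_dot_ne φ hspan hx
    refine Finset.sum_pos' (fun i _ => mul_nonneg (hw i).le (sq_nonneg _)) ⟨j, Finset.mem_univ j, ?_⟩
    exact mul_pos (hw j) (sq_pos_of_ne_zero hj)

lemma sum_w_dot (w : ι → ℝ) (hdet : IsUnit (designMatrix φ w).det) :
    ∑ j, w j * (φ j ⬝ᵥ ((designMatrix φ w)⁻¹ *ᵥ φ j)) = d := by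
  have h1 : (designMatrix φ w)⁻¹ * designMatrix φ w = 1 := nonsing_inv_mul _ hdet
  have h2 : (designMatrix φ w)⁻¹ * designMatrix φ w
      = ∑ j, w j • ((designMatrix φ w)⁻¹ * vecMulVec (φ j) (φ j)) := by
    rw [designMatrix, Finset.mul_sum]
    exact Finset.sum_congr rfl fun j _ => Matrix.mul_smul _ _ _
  have h3 : ∀ j, trace ((designMatrix φ w)⁻¹ * vecMulVec (φ j) (φ j))
      = φ j ⬝ᵥ ((designMatrix φ w)⁻¹ *ᵥ φ j) := by
    intro j
    rw [vecMulVec_eq Unit, ← Matrix.mul_assoc, ← Matrix.replicateCol_mulVec, trace_replicateCol_mul_replicateRow,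
      dotProduct_comm]
  calc ∑ j, w j * (φ j ⬝ᵥ ((designMatrix φ w)⁻¹ *ᵥ φ j))
      = trace ((designMatrix φ w)⁻¹ * designMatrix φ w) := by
        rw [h2, trace_sum]
        exact (Finset.sum_congr rfl fun j _ => by rw [trace_smul, smul_eq_mul, h3]).symm
    _ = d := by rw [h1, trace_one]; simp

lemma det_combo (w : ι → ℝ) (hdet : IsUnit (designMatrix φ w).det) {t : ℝ}
    (ht1 : t < 1) (u : Fin d → ℝ) :
    ((1 - t) • designMatrix φ w + t • vecMulVec u u).det
      = (1 - t) ^ d * (designMatrix φ w).det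
        * (1 + (1 - t)⁻¹ * (t * (u ⬝ᵥ ((designMatrix φ w)⁻¹ *ᵥ u)))) := by
  set M := designMatrix φ w with hM
  have h1t : (1 : ℝ) - t ≠ 0 := by linarith
  have hA : IsUnit ((1 - t) • M).det := by
    rw [det_smul]
    simp only [Fintype.card_fin]
    exact (isUnit_iff_ne_zero.mpr (pow_ne_zero _ h1t)).mul hdet
  have hcol : t • vecMulVec u u = replicateCol Unit (t • u) * replicateRow Unit u := by
    rw [← vecMulVec_eq]; ext i k; simp [vecMulVec_apply, mul_assoc]
  haveI := invertibleOfNonzero h1t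
  have hainv : ((1 - t) • M)⁻¹ = (1 - t)⁻¹ • M⁻¹ :=
    (Matrix.inv_smul M (1 - t) hdet).trans (by rw [invOf_eq_inv])
  rw [hcol, det_add_replicateCol_mul_replicateRow hA, hainv, Matrix.mul_assoc,
    ← Matrix.replicateCol_mulVec, det_unique (n := Unit), Matrix.add_apply, Matrix.one_apply_eq,
    replicateRow_mul_replicateCol_apply, det_smul]
  simp only [Fintype.card_fin, smul_mulVec, mulVec_smul, dotProduct_smul, smul_eq_mul]
  ring

lemma slope_tendsto (d : ℕ) :
    Filter.Tendsto (fun t : ℝ => (1 - (1 - t) ^ d) / t * ((1 - t) * ((1 - t) ^ d)⁻¹))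
      (nhdsWithin 0 (Set.Ioi 0)) (nhds d) := by
  have hf : HasDerivAt (fun t : ℝ => 1 - (1 - t) ^ d) d 0 := by
    have h1 : HasDerivAt (fun t : ℝ => 1 - t) (-1) 0 := (hasDerivAt_id 0).const_sub 1
    have h3 := (h1.fun_pow d).const_sub 1
    refine h3.congr_deriv ?_
    simp
  have hslope := hasDerivAt_iff_tendsto_slope.mp hf
  have h4 : Filter.Tendsto (fun t : ℝ => (1 - (1 - t) ^ d) / t)
      (nhdsWithin 0 (Set.Ioi 0)) (nhds d) := by
    have h := hslope.mono_left
      (nhdsWithin_mono 0 fun x hx => Set.mem_compl_singleton_iff.mpr (ne_of_gt hx))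
    refine h.congr fun t => ?_
    simp [slope_def_field]
  have h5 : Filter.Tendsto (fun t : ℝ => (1 - t) * ((1 - t) ^ d)⁻¹)
      (nhdsWithin 0 (Set.Ioi 0)) (nhds 1) := by
    have hc : ContinuousAt (fun t : ℝ => (1 - t) * ((1 - t) ^ d)⁻¹) 0 := by
      apply ContinuousAt.mul
      · exact continuousAt_const.sub continuousAt_id
      · exact ((continuousAt_const.sub continuousAt_id).pow d).inv₀ (by norm_num)
    have := hc.tendsto.mono_left (nhdsWithin_le_nhds (s := Set.Ioi (0:ℝ)))
    simpa using this
  simpa using h4.mul h5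

lemma exists_max [Nonempty ι] (hspan : Submodule.span ℝ (Set.range φ) = ⊤) :
    ∃ w : ι → ℝ, (∀ j, 0 ≤ w j) ∧ ∑ j, w j = 1 ∧ IsUnit (designMatrix φ w).det ∧
      ∀ j, φ j ⬝ᵥ ((designMatrix φ w)⁻¹ *ᵥ φ j) ≤ d := by
  classical
  have hm : (0:ℝ) < (Fintype.card ι : ℝ) := by exact_mod_cast Fintype.card_pos
  set w₀ : ι → ℝ := fun _ => (Fintype.card ι : ℝ)⁻¹ with hw₀def
  have hw₀mem : w₀ ∈ stdSimplex ℝ ι := by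
    refine ⟨fun _ => by positivity, ?_⟩
    rw [Finset.sum_const, nsmul_eq_mul]
    field_simp
    simp
  have hpos₀ : (designMatrix φ w₀).PosDef :=
    posDef_designMatrix φ hspan w₀ (fun _ => by positivity)
  have hcont : Continuous fun w : ι → ℝ => (designMatrix φ w).det := by
    refine Continuous.matrix_det ?_
    exact continuous_finset_sum _ fun j _ => ((continuous_apply j).smul continuous_const)
  obtain ⟨w, hwS, hwmax⟩ :=
    (isCompact_stdSimplex ℝ ι).exists_isMaxOn ⟨w₀, hw₀mem⟩ hcont.continuousOn
  have hwmax' := isMaxOn_iff.mp hwmax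
  have hDpos : 0 < (designMatrix φ w).det := lt_of_lt_of_le hpos₀.det_pos (hwmax' w₀ hw₀mem)
  have hdet : IsUnit (designMatrix φ w).det := isUnit_iff_ne_zero.mpr hDpos.ne'
  refine ⟨w, hwS.1, hwS.2, hdet, fun j => ?_⟩
  have hev : ∀ᶠ t : ℝ in nhdsWithin 0 (Set.Ioi 0),
      φ j ⬝ᵥ ((designMatrix φ w)⁻¹ *ᵥ φ j)
        ≤ (1 - (1 - t) ^ d) / t * ((1 - t) * ((1 - t) ^ d)⁻¹) := by
    filter_upwards [Ioo_mem_nhdsGT_of_mem (Set.left_mem_Ico.mpr one_pos)] with t ht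
    obtain ⟨ht0, ht1⟩ := ht
    have h1t : (0:ℝ) < 1 - t := by linarith
    have hwt : ((1 - t) • w + t • (Pi.single j 1 : ι → ℝ)) ∈ stdSimplex ℝ ι := by
      constructor
      · intro i
        have h1 := hwS.1 i
        have h2 : (0:ℝ) ≤ (Pi.single j 1 : ι → ℝ) i := by
          rcases eq_or_ne i j with rfl | h
          · simp
          · simp [Pi.single_apply, h]
        have : (0:ℝ) ≤ (1 - t) * w i + t * (Pi.single j 1 : ι → ℝ) i := by positivity
        simpa using this
      · have hsingle : ∑ i, Pi.single j (1:ℝ) i = 1 := by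
          rw [Finset.sum_eq_single j]
          · simp
          · intro b _ hb; simp [Pi.single_apply, hb]
          · intro hj; exact absurd (Finset.mem_univ j) hj
        simp only [Pi.add_apply, Pi.smul_apply, smul_eq_mul]
        rw [Finset.sum_add_distrib, ← Finset.mul_sum, ← Finset.mul_sum, hwS.2, hsingle]
        ring
    have hle := hwmax' _ hwt
    rw [designMatrix_combo, designMatrix_single, det_combo φ w hdet ht1] at hle
    set c := φ j ⬝ᵥ ((designMatrix φ w)⁻¹ *ᵥ φ j) with hc
    set D := (designMatrix φ w).det with hD
    set P := (1 - t) ^ d with hP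
    have hPpos : 0 < P := pow_pos h1t d
    have h2 : P * (1 + (1 - t)⁻¹ * (t * c)) ≤ 1 := by nlinarith [hle, hDpos]
    have hq : 0 < t * ((1 - t)⁻¹ * P) := by positivity
    have h3 : c ≤ (1 - P) / (t * ((1 - t)⁻¹ * P)) := by
      rw [le_div_iff₀ hq]
      nlinarith [h2]
    have h4 : (1 - P) / (t * ((1 - t)⁻¹ * P)) = (1 - P) / t * ((1 - t) * P⁻¹) := by
      have hPne : P ≠ 0 := hPpos.ne'
      have htne : t ≠ 0 := ht0.ne'
      have h1tne : (1:ℝ) - t ≠ 0 := h1t.ne'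
      field_simp
    rw [h4] at h3
    exact h3
  exact ge_of_tendsto (slope_tendsto d) hev
end Aux

/-- **Existence of a G-optimal design.** Let `φ 1, …, φ m ∈ ℝ^d` span `ℝ^d`. Then there
exists a probability distribution `ws` on `{1, …, m}` such that `V(ws)` is invertible and
`g(ws) = max_j (φ j)ᵀ V(ws)⁻¹ (φ j) = d`; in particular, the infimum of `g(w)` over all
probability distributions `w` with `V(w)` invertible equals `d` and is attained. -/
theorem g_optimal_design_exists
    {ι : Type*} [Fintype ι] [Nonempty ι] {d : ℕ} (φ : ι → Fin d → ℝ)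
    (hspan : Submodule.span ℝ (Set.range φ) = ⊤) :
    (∃ ws : ι → ℝ, (∀ j, 0 ≤ ws j) ∧ ∑ j, ws j = 1 ∧
      IsUnit (designMatrix φ ws).det ∧ gOpt φ ws = d) ∧
    IsLeast {x : ℝ | ∃ w : ι → ℝ, (∀ j, 0 ≤ w j) ∧ ∑ j, w j = 1 ∧
      IsUnit (designMatrix φ w).det ∧ gOpt φ w = x} d := by
  have glower : ∀ v : ι → ℝ, (∀ j, 0 ≤ v j) → ∑ j, v j = 1 →
      IsUnit (designMatrix φ v).det → (d : ℝ) ≤ gOpt φ v := by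
    intro v hv0 hv1 hdv
    calc (d:ℝ) = ∑ j, v j * (φ j ⬝ᵥ ((designMatrix φ v)⁻¹ *ᵥ φ j)) := (sum_w_dot φ v hdv).symm
      _ ≤ ∑ j, v j * gOpt φ v := by
          rw [gOpt]
          exact Finset.sum_le_sum fun j _ =>
            mul_le_mul_of_nonneg_left (Finset.le_sup'
              (fun j => φ j ⬝ᵥ ((designMatrix φ v)⁻¹ *ᵥ φ j)) (Finset.mem_univ j)) (hv0 j)
      _ = gOpt φ v := by rw [← Finset.sum_mul, hv1, one_mul]
  obtain ⟨w, hw0, hw1, hdet, hle⟩ := exists_max φ hspan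
  have hg : gOpt φ w = d := le_antisymm
    (by rw [gOpt]; exact Finset.sup'_le _ _ fun j _ => hle j) (glower w hw0 hw1 hdet)
  refine ⟨⟨w, hw0, hw1, hdet, hg⟩, ⟨⟨w, hw0, hw1, hdet, hg⟩, ?_⟩⟩
  rintro x ⟨v, hv0, hv1, hdv, rfl⟩
  exact glower v hv0 hv1 hdv
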